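/- Let n ≥ 2, let J be a skew-symmetric real n × n matrix, and let M = ℝⁿ × ℝⁿ × ℝ. Write (Ky)_i = Σ_j J_{ij} y_j for y ∈ ℝⁿ. Define the operator V_Θ on complex-valued functions on M × M by (V_Θξ)(x,y,r;x',y',r') = exp(2πi·(r'²/2)·Σ_{i,j} J_{ij} y_j (y'_i − y_i))·exp(−2πi·r'·⟨x, y' − y⟩)·ξ(x − r'·Ky, y, r+r'; x' − x + r'·Ky, y' − y, r'). Then V_Θ satisfies the pentagon equation: (V_Θ)₁₂ ∘ (V_Θ)₁₃ ∘ (V_Θ)₂₃ = (V_Θ)₂₃ ∘ (V_Θ)₁₂ as operators on complex-valued functions on M × M × M. -/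

import Mathlib

open scoped BigOperators

noncomputable section

/-- `M = ℝⁿ × ℝⁿ × ℝ`, with coordinates `(x,y,r)`. -/
abbrev M (n : ℕ) : Type := (Fin n → ℝ) × (Fin n → ℝ) × ℝ

/-- `(Ky)_i = Σ_j J_{ij} y_j`. -/
def Kmap {n : ℕ} (J : Matrix (Fin n) (Fin n) ℝ) (y : Fin n → ℝ) : Fin n → ℝ :=
  fun i => ∑ j, J i j * y j

/-- The operator `V_Θ` on functions on `M × M` (quantization of Case (3)):
`(V_Θξ)(x,y,r;x',y',r') = exp(2πi·(r'²/2)·Σ_{i,j} J_{ij} y_j (y'_i − y_i))·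
exp(−2πi·r'·⟨x, y'−y⟩)·ξ(x − r'·Ky, y, r+r'; x'−x+r'·Ky, y'−y, r')`. -/
def VθJ (n : ℕ) (J : Matrix (Fin n) (Fin n) ℝ) (ξ : M n × M n → ℂ) :
    M n × M n → ℂ := fun v =>
  let x := v.1.1; let y := v.1.2.1; let r := v.1.2.2
  let x' := v.2.1; let y' := v.2.2.1; let r' := v.2.2.2
  Complex.exp ((2 * Real.pi * Complex.I) * ((r' ^ 2 / 2 : ℝ) : ℂ)
      * ((∑ i, ∑ j, J i j * y j * (y' i - y i) : ℝ) : ℂ))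
    * Complex.exp (-(2 * Real.pi * Complex.I) * (r' : ℂ)
        * ((∑ i, x i * (y' i - y i) : ℝ) : ℂ))
    * ξ ((x - r' • Kmap J y, y, r + r'),
         (x' - x + r' • Kmap J y, y' - y, r'))

/-- The leg operator `W₁₂` on functions on `M × M × M`. -/
def leg12 {n : ℕ} (W : (M n × M n → ℂ) → (M n × M n → ℂ)) :
    (M n × M n × M n → ℂ) → (M n × M n × M n → ℂ) := fun ξ p =>
  W (fun q => ξ (q.1, q.2, p.2.2)) (p.1, p.2.1)

/-- The leg operator `W₁₃` on functions on `M × M × M`. -/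
def leg13 {n : ℕ} (W : (M n × M n → ℂ) → (M n × M n → ℂ)) :
    (M n × M n × M n → ℂ) → (M n × M n × M n → ℂ) := fun ξ p =>
  W (fun q => ξ (q.1, p.2.1, q.2)) (p.1, p.2.2)

/-- The leg operator `W₂₃` on functions on `M × M × M`. -/
def leg23 {n : ℕ} (W : (M n × M n → ℂ) → (M n × M n → ℂ)) :
    (M n × M n × M n → ℂ) → (M n × M n × M n → ℂ) := fun ξ p =>
  W (fun q => ξ (p.1, q.1, q.2)) (p.2.1, p.2.2)

/-- For a skew-symmetric `J` (`n ≥ 2`), `V_Θ` satisfies the pentagon equation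
`(V_Θ)₁₂ (V_Θ)₁₃ (V_Θ)₂₃ = (V_Θ)₂₃ (V_Θ)₁₂`. -/
theorem VθJ_pentagon (n : ℕ) (hn : 2 ≤ n) (J : Matrix (Fin n) (Fin n) ℝ)
    (hJ : ∀ i j, J i j = - J j i) :
    leg12 (VθJ n J) ∘ leg13 (VθJ n J) ∘ leg23 (VθJ n J)
      = leg23 (VθJ n J) ∘ leg12 (VθJ n J) := by
  funext ξ p
  obtain ⟨⟨x1,y1,r1⟩,⟨x2,y2,r2⟩,⟨x3,y3,r3⟩⟩ := p
  simp only [Function.comp, leg12, leg13, leg23, VθJ]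
  have harg : ((x1 - r2 • Kmap J y1 - r3 • Kmap J y1, y1, r1 + r2 + r3),
      (x2 - x1 + r2 • Kmap J y1 - r3 • Kmap J (y2 - y1), y2 - y1, r2 + r3),
      (x3 - (x1 - r2 • Kmap J y1) + r3 • Kmap J y1 - (x2 - x1 + r2 • Kmap J y1) + r3 • Kmap J (y2 - y1),
        y3 - y1 - (y2 - y1), r3)) =
      (((x1 - (r2 + r3) • Kmap J y1, y1, r1 + (r2 + r3)),
        (x2 - r3 • Kmap J y2 - x1 + (r2 + r3) • Kmap J y1, y2 - y1, r2 + r3),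
        (x3 - x2 + r3 • Kmap J y2, y3 - y2, r3)) : M n × M n × M n) := by
    have hK : Kmap J (y2 - y1) = Kmap J y2 - Kmap J y1 := by
      funext i
      simp only [Kmap, Pi.sub_apply, mul_sub, Finset.sum_sub_distrib]
    simp only [hK, Prod.mk.injEq]
    and_intros <;> first | module | abel | ring | trivial
  rw [harg]
  set X := ξ ((x1 - (r2 + r3) • Kmap J y1, y1, r1 + (r2 + r3)),
        (x2 - r3 • Kmap J y2 - x1 + (r2 + r3) • Kmap J y1, y2 - y1, r2 + r3),
        (x3 - x2 + r3 • Kmap J y2, y3 - y2, r3)) with hX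
  have h6 : ∀ a b c d e f : ℂ, a*b*(c*d*(e*f*X)) = (a*b*c*d*e*f)*X := fun _ _ _ _ _ _ => by ring
  have h4 : ∀ a b c d : ℂ, a*b*(c*d*X) = (a*b*c*d)*X := fun _ _ _ _ => by ring
  rw [h6, h4]
  congr 1
  rw [← Complex.exp_add, ← Complex.exp_add, ← Complex.exp_add, ← Complex.exp_add,
      ← Complex.exp_add, ← Complex.exp_add, ← Complex.exp_add, ← Complex.exp_add]
  congr 1
  simp only [Pi.sub_apply, Pi.add_apply, Pi.smul_apply, smul_eq_mul, Kmap,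
    mul_sub, sub_mul, add_mul, Finset.sum_sub_distrib, Finset.sum_add_distrib,
    Finset.sum_mul, Finset.mul_sum]
  push_cast
  ring_nf
  simp only [Finset.mul_sum, Finset.sum_mul]
  ring_nf
  simp only [mul_comm, mul_left_comm, mul_assoc]
  abel

end
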